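/- For all integers k ≥ 1, i with 0 ≤ i ≤ 2k−2, and l ≥ 0, one has C(2k−2, k−1) · Σ_{t = max(0, k−1−i)}^{2k−2−i} C(k−1, t) · C(k−1, 2k−2−i−t) · C(i+t−k+1, l) = C(2k−2, i) · C(i, l) · C(2k−2−l, k−1), where C(n,m) denotes the binomial coefficient (with C(n,m) = 0 whenever m > n ≥ 0). -/

import Mathlib

open Finset

/-- Vandermonde's identity in `range` form. -/
private lemma vand (a b K : ℕ) :
    (a + b).choose K = ∑ r ∈ Finset.range (K + 1), a.choose r * b.choose (K - r) := by
  rw [Nat.add_choose_eq, Finset.Nat.sum_antidiagonal_eq_sum_range_succ_mk]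

/-- The key sum identity. -/
private lemma star (n i l : ℕ) (hi : i ≤ 2 * n) (hl : l ≤ i) :
    ∑ t ∈ Finset.Icc (n - i) (2 * n - i),
        n.choose t * n.choose (2 * n - i - t) * (i + t - n).choose l
      = n.choose l * (2 * n - l).choose (i - l) := by
  rcases le_or_gt l n with hln | hln
  · rcases le_or_gt i n with hin | hin
    · -- Case A : i ≤ n
      calc
        ∑ t ∈ Finset.Icc (n - i) (2 * n - i),
            n.choose t * n.choose (2 * n - i - t) * (i + t - n).choose l
            = ∑ t ∈ Finset.Icc (n - i + l) n,
                n.choose t * n.choose (2 * n - i - t) * (i + t - n).choose l := by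
          symm
          apply Finset.sum_subset
          · intro x hx
            rw [Finset.mem_Icc] at *
            omega
          · intro x hx hx'
            rw [Finset.mem_Icc] at hx hx'
            rcases lt_or_ge x (n - i + l) with h | h
            · have : i + x - n < l := by omega
              rw [Nat.choose_eq_zero_of_lt this, mul_zero]
            · have : n < x := by omega
              rw [Nat.choose_eq_zero_of_lt this, zero_mul, zero_mul]
        _ = ∑ j ∈ Finset.Icc l i,
              n.choose l * (n.choose (n - i + j) * (n - l).choose (j - l)) := by
          apply Finset.sum_nbij' (fun t => i + t - n) (fun j => n - i + j)
          · intro t ht; rw [Finset.mem_Icc] at *; omega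
          · intro j hj; rw [Finset.mem_Icc] at *; omega
          · intro t ht; rw [Finset.mem_Icc] at ht; omega
          · intro j hj; rw [Finset.mem_Icc] at hj; omega
          · intro t ht
            rw [Finset.mem_Icc] at ht
            have e1 : n - i + (i + t - n) = t := by omega
            have e2 : n.choose (2 * n - i - t) = n.choose (i + t - n) := by
              rw [← Nat.choose_symm (show i + t - n ≤ n by omega)]
              congr 1; omega
            rw [e1, e2, mul_assoc,
              Nat.choose_mul (show l ≤ i + t - n by omega)]
            ring
        _ = n.choose l * ∑ j ∈ Finset.Icc l i,
              n.choose (n - i + j) * (n - l).choose (j - l) := by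
          rw [Finset.mul_sum]
        _ = n.choose l * (2 * n - l).choose (i - l) := by
          congr 1
          rw [show 2 * n - l = (n - l) + n by omega, vand]
          apply Finset.sum_nbij' (fun j => j - l) (fun r => r + l)
          · intro j hj; rw [Finset.mem_Icc] at hj; rw [Finset.mem_range]; omega
          · intro r hr; rw [Finset.mem_range] at hr; rw [Finset.mem_Icc]; omega
          · intro j hj; rw [Finset.mem_Icc] at hj; omega
          · intro r hr; rw [Finset.mem_range] at hr; omega
          · intro j hj
            rw [Finset.mem_Icc] at hj
            have e1 : n.choose (n - i + j) = n.choose (i - l - (j - l)) := by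
              rw [← Nat.choose_symm (show i - l - (j - l) ≤ n by omega)]
              congr 1; omega
            rw [e1, mul_comm]
    · -- Case B : n < i
      calc
        ∑ t ∈ Finset.Icc (n - i) (2 * n - i),
            n.choose t * n.choose (2 * n - i - t) * (i + t - n).choose l
            = ∑ t ∈ Finset.Icc (l + n - i) (2 * n - i),
                n.choose t * n.choose (2 * n - i - t) * (i + t - n).choose l := by
          symm
          apply Finset.sum_subset
          · intro x hx; rw [Finset.mem_Icc] at *; omega
          · intro x hx hx'
            rw [Finset.mem_Icc] at hx hx'
            have : i + x - n < l := by omega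
            rw [Nat.choose_eq_zero_of_lt this, mul_zero]
        _ = ∑ t ∈ Finset.Icc (l + n - i) (2 * n - i),
              n.choose l * (n.choose t * (n - l).choose (i + t - n - l)) := by
          apply Finset.sum_congr rfl
          intro t ht
          rw [Finset.mem_Icc] at ht
          have e2 : n.choose (2 * n - i - t) = n.choose (i + t - n) := by
            rw [← Nat.choose_symm (show i + t - n ≤ n by omega)]
            congr 1; omega
          rw [e2, mul_assoc,
            Nat.choose_mul (show l ≤ i + t - n by omega)]
          ring
        _ = n.choose l * ∑ t ∈ Finset.Icc (l + n - i) (2 * n - i),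
              n.choose t * (n - l).choose (i + t - n - l) := by
          rw [Finset.mul_sum]
        _ = n.choose l * (2 * n - l).choose (i - l) := by
          congr 1
          rw [show 2 * n - l = (n - l) + n by omega, vand]
          have step : ∑ r ∈ Finset.range (i - l + 1), (n - l).choose r * n.choose (i - l - r)
              = ∑ r ∈ Finset.Icc (i - n - l) (n - l),
                  (n - l).choose r * n.choose (i - l - r) := by
            symm
            apply Finset.sum_subset
            · intro x hx
              rw [Finset.mem_Icc] at hx; rw [Finset.mem_range]; omega
            · intro x hx hx'
              rw [Finset.mem_range] at hx; rw [Finset.mem_Icc] at hx'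
              rcases lt_or_ge x (i - n - l) with h | h
              · have : n < i - l - x := by omega
                rw [Nat.choose_eq_zero_of_lt this, mul_zero]
              · have : n - l < x := by omega
                rw [Nat.choose_eq_zero_of_lt this, zero_mul]
          rw [step]
          apply Finset.sum_nbij' (fun t => i + t - n - l) (fun r => r + l + n - i)
          · intro t ht; rw [Finset.mem_Icc] at *; omega
          · intro r hr; rw [Finset.mem_Icc] at *; omega
          · intro t ht; rw [Finset.mem_Icc] at ht; omega
          · intro r hr; rw [Finset.mem_Icc] at hr; omega
          · intro t ht
            rw [Finset.mem_Icc] at ht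
            have e1 : n.choose t = n.choose (i - l - (i + t - n - l)) := by
              rw [← Nat.choose_symm (show t ≤ n by omega)]
              congr 1; omega
            rw [e1, mul_comm]
  · -- l > n : both sides vanish
    rw [Nat.choose_eq_zero_of_lt hln, zero_mul]
    apply Finset.sum_eq_zero
    intro t ht
    rw [Finset.mem_Icc] at ht
    have h : i + t - n < l := by omega
    rw [Nat.choose_eq_zero_of_lt h, mul_zero]

/-- The closing binomial identity. -/
private lemma fin_aux (n i l : ℕ) (hi : i ≤ 2 * n) (hl : l ≤ i) :
    (2 * n).choose n * (n.choose l * (2 * n - l).choose (i - l))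
      = (2 * n).choose i * i.choose l * (2 * n - l).choose n := by
  rcases le_or_gt l n with hln | hln
  · have h1 := Nat.choose_mul (n := 2 * n) (k := i) (s := l) hl
    have h2 := Nat.choose_mul (n := 2 * n) (k := n) (s := l) hln
    have h3 : (2 * n - l).choose (n - l) = (2 * n - l).choose n := by
      rw [← Nat.choose_symm (show n ≤ 2 * n - l by omega)]
      congr 1; omega
    calc (2 * n).choose n * (n.choose l * (2 * n - l).choose (i - l))
        = ((2 * n).choose n * n.choose l) * (2 * n - l).choose (i - l) := by ring
      _ = ((2 * n).choose l * (2 * n - l).choose (n - l)) * (2 * n - l).choose (i - l) := by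
          rw [h2]
      _ = ((2 * n).choose l * (2 * n - l).choose (i - l)) * (2 * n - l).choose n := by
          rw [h3]; ring
      _ = ((2 * n).choose i * i.choose l) * (2 * n - l).choose n := by rw [← h1]
      _ = (2 * n).choose i * i.choose l * (2 * n - l).choose n := by ring
  · have h4 : n.choose l = 0 := Nat.choose_eq_zero_of_lt hln
    have h5 : (2 * n - l).choose n = 0 := Nat.choose_eq_zero_of_lt (by omega)
    rw [h4, h5, mul_zero, zero_mul, mul_zero]

/-- For all integers `k ≥ 1`, `0 ≤ i ≤ 2k−2` and `l ≥ 0`: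
`C(2k−2, k−1) · Σ_{t = max(0,k−1−i)}^{2k−2−i} C(k−1,t)·C(k−1,2k−2−i−t)·C(i+t−k+1, l)
  = C(2k−2, i)·C(i,l)·C(2k−2−l, k−1)`.
(In `ℕ`, the truncated subtraction `k - 1 - i` equals `max (0) (k−1−i)`, and for
`t ≥ k−1−i` the quantity `i + t + 1 - k` equals `i + t − k + 1`.) -/
theorem stmt9 (k i l : ℕ) (hk : 1 ≤ k) (hi : i ≤ 2 * k - 2) :
    Nat.choose (2 * k - 2) (k - 1) *
        ∑ t ∈ Finset.Icc (k - 1 - i) (2 * k - 2 - i),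
          Nat.choose (k - 1) t * Nat.choose (k - 1) (2 * k - 2 - i - t) *
            Nat.choose (i + t + 1 - k) l
      = Nat.choose (2 * k - 2) i * Nat.choose i l * Nat.choose (2 * k - 2 - l) (k - 1) := by
  obtain ⟨n, rfl⟩ : ∃ n, k = n + 1 := ⟨k - 1, by omega⟩
  have h2 : 2 * (n + 1) - 2 = 2 * n := by omega
  have h1 : n + 1 - 1 = n := by omega
  simp only [h2, h1]
  have hsum : ∀ t, i + t + 1 - (n + 1) = i + t - n := fun t => by omega
  simp only [hsum]
  have hi' : i ≤ 2 * n := by omega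
  rcases le_or_gt l i with hl | hl
  · rw [star n i l hi' hl]
    exact fin_aux n i l hi' hl
  · rw [Nat.choose_eq_zero_of_lt hl, mul_zero, zero_mul]
    rw [Finset.sum_eq_zero, mul_zero]
    intro t ht
    rw [Finset.mem_Icc] at ht
    rcases le_or_gt t n with h | h
    · have : i + t - n < l := by omega
      rw [Nat.choose_eq_zero_of_lt this, mul_zero]
    · rw [Nat.choose_eq_zero_of_lt h, zero_mul, zero_mul]
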